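/- arXiv:2602.01801 — 2 statements merged into one kernel-verified Lean document; each statement's English description precedes it below -/
import Mathlib

section
/- Monotone error bound for approximate key merging: let s, s' : Fin n → ℝ with |s_i − s'_i| ≤ ε for all i, and let v_i ∈ ℝ^{d'} with ‖v_i‖ ≤ M. Then the softmax-weighted averages satisfy ‖(∑ e^{s_i} v_i)/(∑ e^{s_i}) − (∑ e^{s'_i} v_i)/(∑ e^{s'_i})‖ ≤ 2M(e^{2ε} − 1). -/
/-- Monotone error bound for approximate key merging: perturbing each logit by at
most `ε` changes the softmax-weighted average by at most `2M(e^{2ε} - 1)` in norm,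
where `M` bounds the norms of the values. -/
theorem softmax_average_perturbation_bound
    (n d' : ℕ) (hn : 1 ≤ n)
    (s s' : Fin n → ℝ) (ε : ℝ)
    (v : Fin n → EuclideanSpace ℝ (Fin d')) (M : ℝ)
    (hε : ∀ i, |s i - s' i| ≤ ε)
    (hM : ∀ i, ‖v i‖ ≤ M) :
    ‖(∑ i, Real.exp (s i))⁻¹ • (∑ i, Real.exp (s i) • v i)
        - (∑ i, Real.exp (s' i))⁻¹ • (∑ i, Real.exp (s' i) • v i)‖
      ≤ 2 * M * (Real.exp (2 * ε) - 1) := by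
  haveI : NeZero n := ⟨by omega⟩
  set Z := ∑ i, Real.exp (s i) with hZdef
  set Z' := ∑ i, Real.exp (s' i) with hZ'def
  have hZpos : 0 < Z := Finset.sum_pos (fun i _ => Real.exp_pos _) Finset.univ_nonempty
  have hZ'pos : 0 < Z' := Finset.sum_pos (fun i _ => Real.exp_pos _) Finset.univ_nonempty
  have i0 : Fin n := ⟨0, by omega⟩
  have hε0 : 0 ≤ ε := le_trans (abs_nonneg _) (hε i0)
  have hM0 : 0 ≤ M := le_trans (norm_nonneg _) (hM i0)
  set w : Fin n → ℝ := fun i => Real.exp (s i) / Z with hw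
  set w' : Fin n → ℝ := fun i => Real.exp (s' i) / Z' with hw'
  -- rewrite LHS as a single sum
  have hrw : Z⁻¹ • (∑ i, Real.exp (s i) • v i) - Z'⁻¹ • (∑ i, Real.exp (s' i) • v i)
      = ∑ i, (w i - w' i) • v i := by
    rw [Finset.smul_sum, Finset.smul_sum, ← Finset.sum_sub_distrib]
    refine Finset.sum_congr rfl fun i _ => ?_
    rw [sub_smul, smul_smul, smul_smul]
    congr 1 <;> simp [hw, hw', div_eq_inv_mul]
  rw [hrw]
  -- exp bound on Z, Z'
  have hZZ' : Z' ≤ Real.exp ε * Z := by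
    rw [Finset.mul_sum]
    refine Finset.sum_le_sum fun i _ => ?_
    rw [← Real.exp_add]
    exact Real.exp_le_exp.2 (by have := abs_le.1 (hε i); linarith)
  have hZ'Z : Z ≤ Real.exp ε * Z' := by
    rw [Finset.mul_sum]
    refine Finset.sum_le_sum fun i _ => ?_
    rw [← Real.exp_add]
    exact Real.exp_le_exp.2 (by have := abs_le.1 (hε i); linarith)
  -- per-index bound
  have key : ∀ i, |w i - w' i| ≤ (Real.exp (2 * ε) - 1) * w' i := by
    intro i
    have hes : Real.exp (s i) ≤ Real.exp ε * Real.exp (s' i) := by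
      rw [← Real.exp_add]
      exact Real.exp_le_exp.2 (by have := abs_le.1 (hε i); linarith)
    have hes' : Real.exp (s' i) ≤ Real.exp ε * Real.exp (s i) := by
      rw [← Real.exp_add]
      exact Real.exp_le_exp.2 (by have := abs_le.1 (hε i); linarith)
    have h1 : w i ≤ Real.exp (2 * ε) * w' i := by
      rw [hw, hw', div_le_iff₀ hZpos]
      have : Real.exp (2 * ε) = Real.exp ε * Real.exp ε := by
        rw [← Real.exp_add]; ring_nf
      rw [this]
      have hw'pos : 0 < Real.exp (s' i) / Z' := div_pos (Real.exp_pos _) hZ'pos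
      calc Real.exp (s i) ≤ Real.exp ε * Real.exp (s' i) := hes
        _ = Real.exp ε * (Real.exp (s' i) / Z') * Z' := by field_simp
        _ ≤ Real.exp ε * (Real.exp (s' i) / Z') * (Real.exp ε * Z) := by
            apply mul_le_mul_of_nonneg_left hZZ'
            positivity
        _ = Real.exp ε * Real.exp ε * (Real.exp (s' i) / Z') * Z := by ring
    have h2 : w' i ≤ Real.exp (2 * ε) * w i := by
      rw [hw, hw', div_le_iff₀ hZ'pos]
      have : Real.exp (2 * ε) = Real.exp ε * Real.exp ε := by
        rw [← Real.exp_add]; ring_nf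
      rw [this]
      calc Real.exp (s' i) ≤ Real.exp ε * Real.exp (s i) := hes'
        _ = Real.exp ε * (Real.exp (s i) / Z) * Z := by field_simp
        _ ≤ Real.exp ε * (Real.exp (s i) / Z) * (Real.exp ε * Z') := by
            apply mul_le_mul_of_nonneg_left hZ'Z
            positivity
        _ = Real.exp ε * Real.exp ε * (Real.exp (s i) / Z) * Z' := by ring
    have hwpos : 0 < w i := div_pos (Real.exp_pos _) hZpos
    have hw'pos : 0 < w' i := div_pos (Real.exp_pos _) hZ'pos
    have hexp1 : 1 ≤ Real.exp (2 * ε) := Real.one_le_exp (by linarith)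
    rw [abs_le]
    constructor
    · -- w' i - w i ≤ (e^{2ε} - 1) * w' i, i.e. need w i ≥ e^{-2ε} w' i
      have hE : 0 < Real.exp (2 * ε) := Real.exp_pos _
      nlinarith [h2, mul_pos hE hw'pos]
    · nlinarith [h1]
  -- sum of w' is 1
  have hsum : ∑ i, w' i = 1 := by
    rw [hw']
    rw [← Finset.sum_div]
    exact div_self (ne_of_gt hZ'pos)
  calc ‖∑ i, (w i - w' i) • v i‖ ≤ ∑ i, ‖(w i - w' i) • v i‖ := norm_sum_le _ _
    _ ≤ ∑ i, (Real.exp (2 * ε) - 1) * w' i * M := by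
        refine Finset.sum_le_sum fun i _ => ?_
        rw [norm_smul, Real.norm_eq_abs]
        have h1 := key i
        have h2 := hM i
        have := abs_nonneg (w i - w' i)
        nlinarith [norm_nonneg (v i)]
    _ = (Real.exp (2 * ε) - 1) * M * ∑ i, w' i := by
        rw [Finset.mul_sum]; exact Finset.sum_congr rfl fun i _ => by ring
    _ = (Real.exp (2 * ε) - 1) * M := by rw [hsum, mul_one]
    _ ≤ 2 * M * (Real.exp (2 * ε) - 1) := by
        have : 1 ≤ Real.exp (2 * ε) := Real.one_le_exp (by linarith)
        nlinarith
end

section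
/- Error of dropping low-mass indices: with softmax weights p_i summing to 1 over {1,…,n}, nonempty candidate set N, and ‖v_i‖ ≤ M for all i, the renormalized sparse attention over N and the dense attention differ in norm by at most 2M(1 − r), where r = ∑_{i∈N} p_i is the attention recall of N. -/
/-- Error of dropping low-mass indices: with softmax weights `p`, recall
`r = ∑_{i∈N} p i`, and `‖v i‖ ≤ M`, the renormalized sparse attention over `N`
differs from the dense attention by at most `2M(1 - r)` in norm. -/
theorem sparse_attention_recall_error_bound
    (n d' : ℕ) (hn : 1 ≤ n)
    (s : Fin n → ℝ)
    (v : Fin n → EuclideanSpace ℝ (Fin d')) (M : ℝ)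
    (N : Finset (Fin n)) (hN : N.Nonempty)
    (p : Fin n → ℝ)
    (hp : ∀ i, p i = Real.exp (s i) / (∑ l, Real.exp (s l)))
    (hM : ∀ i, ‖v i‖ ≤ M) :
    ‖(∑ i ∈ N, (p i / (∑ l ∈ N, p l)) • v i) - ∑ i, p i • v i‖
      ≤ 2 * M * (1 - ∑ l ∈ N, p l) := by
  have hne : Nonempty (Fin n) := ⟨⟨0, hn⟩⟩
  have hS : 0 < ∑ l, Real.exp (s l) :=
    Finset.sum_pos (fun i _ => Real.exp_pos _) Finset.univ_nonempty
  have hpos : ∀ i, 0 < p i := fun i => by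
    rw [hp]; exact div_pos (Real.exp_pos _) hS
  have hsum : ∑ i, p i = 1 := by
    simp only [hp, ← Finset.sum_div]
    exact div_self hS.ne'
  set r := ∑ l ∈ N, p l with hrdef
  have hr : 0 < r := Finset.sum_pos (fun i _ => hpos i) hN
  have hr1 : r ≤ 1 := by
    rw [← hsum]
    exact Finset.sum_le_sum_of_subset_of_nonneg (Finset.subset_univ N)
      (fun i _ _ => (hpos i).le)
  have hM0 : 0 ≤ M := le_trans (norm_nonneg _) (hM ⟨0, hn⟩)
  have hsdiff := Finset.sum_sdiff (f := p) (Finset.subset_univ N)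
  have hcompl : ∑ i ∈ Finset.univ \ N, p i = 1 - r := by
    rw [hsum] at hsdiff; linarith
  have hsplit : (∑ i, p i • v i)
      = (∑ i ∈ N, p i • v i) + ∑ i ∈ Finset.univ \ N, p i • v i := by
    rw [add_comm, Finset.sum_sdiff (Finset.subset_univ N)]
  have hcoef : ∀ i, 0 ≤ p i / r - p i := by
    intro i
    have : p i * r ≤ p i * 1 := mul_le_mul_of_nonneg_left hr1 (hpos i).le
    have h2 : p i ≤ p i / r := (le_div_iff₀ hr).mpr (by linarith)
    linarith
  have b1 : ‖∑ i ∈ N, (p i / r - p i) • v i‖ ≤ (1 - r) * M := by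
    calc ‖∑ i ∈ N, (p i / r - p i) • v i‖
        ≤ ∑ i ∈ N, ‖(p i / r - p i) • v i‖ := norm_sum_le _ _
      _ ≤ ∑ i ∈ N, (p i / r - p i) * M := by
          refine Finset.sum_le_sum fun i _ => ?_
          rw [norm_smul, Real.norm_eq_abs, abs_of_nonneg (hcoef i)]
          exact mul_le_mul_of_nonneg_left (hM i) (hcoef i)
      _ = (∑ i ∈ N, (p i / r - p i)) * M := (Finset.sum_mul _ _ _).symm
      _ = (1 - r) * M := by
          rw [Finset.sum_sub_distrib, ← Finset.sum_div, ← hrdef, div_self hr.ne']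
  have b2 : ‖∑ i ∈ Finset.univ \ N, p i • v i‖ ≤ (1 - r) * M := by
    calc ‖∑ i ∈ Finset.univ \ N, p i • v i‖
        ≤ ∑ i ∈ Finset.univ \ N, ‖p i • v i‖ := norm_sum_le _ _
      _ ≤ ∑ i ∈ Finset.univ \ N, p i * M := by
          refine Finset.sum_le_sum fun i _ => ?_
          rw [norm_smul, Real.norm_eq_abs, abs_of_nonneg (hpos i).le]
          exact mul_le_mul_of_nonneg_left (hM i) (hpos i).le
      _ = (1 - r) * M := by rw [← Finset.sum_mul, hcompl]
  have key : (∑ i ∈ N, (p i / r) • v i) - ∑ i, p i • v i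
      = (∑ i ∈ N, (p i / r - p i) • v i) - ∑ i ∈ Finset.univ \ N, p i • v i := by
    rw [hsplit]
    simp only [sub_smul, Finset.sum_sub_distrib]
    abel
  rw [key]
  calc ‖(∑ i ∈ N, (p i / r - p i) • v i) - ∑ i ∈ Finset.univ \ N, p i • v i‖
      ≤ ‖∑ i ∈ N, (p i / r - p i) • v i‖ + ‖∑ i ∈ Finset.univ \ N, p i • v i‖ :=
        norm_sub_le _ _
    _ ≤ (1 - r) * M + (1 - r) * M := add_le_add b1 b2
    _ = 2 * M * (1 - r) := by ring
end
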